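/- Let ℓ, c, d ∈ ℕ, let G and H be finite directed labelled graphs of dimension d, and let u be a node of G and v a node of H. Then u and v satisfy the same C²_{ℓ,c} formulas with one free variable (i.e., for every C²_{ℓ,c} formula φ(x), G ⊨ φ(u) if and only if H ⊨ φ(v)) if and only if W^ℓ_c(u) computed in G equals W^ℓ_c(v) computed in H. -/

import Mathlib

/-- The two variables of the logic `C²`. -/
inductive C2Var : Type
  | x : C2Var
  | y : C2Var
deriving DecidableEq

/-- Formulas of `C²`, the two-variable fragment of first-order logic with counting, over
the signature with one binary relation symbol `E` and unary predicates `P₁,…,P_d`.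
`exN k v φ` is the counting quantifier `∃_k v. φ` ("at least `k` elements"). -/
inductive C2 (d : ℕ) : Type
  | eq : C2Var → C2Var → C2 d
  | edge : C2Var → C2Var → C2 d
  | pred : Fin d → C2Var → C2 d
  | not : C2 d → C2 d
  | and : C2 d → C2 d → C2 d
  | or : C2 d → C2 d → C2 d
  | exN : ℕ → C2Var → C2 d → C2 d

/-- Satisfaction of a `C²` formula in a finite directed labelled graph `(V, E, lab)`
under an assignment `a` of the two variables. -/
def C2.sat {d : ℕ} {V : Type} [Fintype V] (E : V → V → Prop) (lab : V → Fin d → Bool) :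
    C2 d → (C2Var → V) → Prop
  | .eq s t, a => a s = a t
  | .edge s t, a => E (a s) (a t)
  | .pred i s, a => lab (a s) i = true
  | .not φ, a => ¬ C2.sat E lab φ a
  | .and φ ψ, a => C2.sat E lab φ a ∧ C2.sat E lab ψ a
  | .or φ ψ, a => C2.sat E lab φ a ∨ C2.sat E lab ψ a
  | .exN k w φ, a => k ≤ Nat.card {u : V | C2.sat E lab φ (Function.update a w u)}

/-- Quantifier nesting depth of a `C²` formula. -/
def C2.depth {d : ℕ} : C2 d → ℕ
  | .eq _ _ => 0
  | .edge _ _ => 0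
  | .pred _ _ => 0
  | .not φ => φ.depth
  | .and φ ψ => max φ.depth ψ.depth
  | .or φ ψ => max φ.depth ψ.depth
  | .exN _ _ φ => φ.depth + 1

/-- Counting rank of a `C²` formula: the maximal `k` occurring in a counting
quantifier `∃_k`. -/
def C2.rank {d : ℕ} : C2 d → ℕ
  | .eq _ _ => 0
  | .edge _ _ => 0
  | .pred _ _ => 0
  | .not φ => φ.rank
  | .and φ ψ => max φ.rank ψ.rank
  | .or φ ψ => max φ.rank ψ.rank
  | .exN k _ φ => max k φ.rank

/-- Free variables of a `C²` formula. -/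
def C2.freeVars {d : ℕ} : C2 d → Finset C2Var
  | .eq s t => {s, t}
  | .edge s t => {s, t}
  | .pred _ s => {s}
  | .not φ => φ.freeVars
  | .and φ ψ => φ.freeVars ∪ ψ.freeVars
  | .or φ ψ => φ.freeVars ∪ ψ.freeVars
  | .exN _ w φ => φ.freeVars.erase w

/-- The multiset `⟦f w : w ∈ V, p w⟧` of values of `f` on the elements satisfying `p`. -/
noncomputable def msetOf {V α : Type} [Fintype V] (p : V → Prop) (f : V → α) : Multiset α :=
  letI := Classical.decPred p
  ((Finset.univ.filter p).val.map f)

/-- Truncate every multiplicity in a multiset to at most `c` (the `c`-bounded multiset). -/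
noncomputable def trunc {α : Type} (c : ℕ) (M : Multiset α) : Multiset α :=
  letI := Classical.decEq α
  M.toFinset.val.bind fun a => Multiset.replicate (min c (M.count a)) a

/-- The type of colours of the (bounded) Weisfeiler–Leman algorithm after `ℓ` rounds, for
graphs of dimension `d`: a colour of round `ℓ+1` is a tuple of a colour of round `ℓ`
and four multisets of colours of round `ℓ`. -/
def WLC (d : ℕ) : ℕ → Type
  | 0 => Fin d → Bool
  | (ℓ+1) => WLC d ℓ × Multiset (WLC d ℓ) × Multiset (WLC d ℓ) × Multiset (WLC d ℓ) ×
      Multiset (WLC d ℓ)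

/-- The `c`-bounded Weisfeiler–Leman colouring `W^ℓ_c` on the directed labelled graph
`(V, E, lab)`:  `W^0_c(v) = lab v` and `W^{ℓ+1}_c(v)` is the tuple of `W^ℓ_c(v)` and the
`c`-bounded multisets of the previous colours over `←N(v)∩→N(v)`, `←N(v)∖→N(v)`,
`→N(v)∖←N(v)` and `V∖(N(v)∪{v})`. -/
noncomputable def WL {d : ℕ} {V : Type} [Fintype V] (E : V → V → Prop)
    (lab : V → Fin d → Bool) (c : ℕ) : (ℓ : ℕ) → V → WLC d ℓ
  | 0, v => lab v
  | (ℓ+1), v =>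
      (WL E lab c ℓ v,
       trunc c (msetOf (fun w => E w v ∧ E v w) (WL E lab c ℓ)),
       trunc c (msetOf (fun w => E w v ∧ ¬ E v w) (WL E lab c ℓ)),
       trunc c (msetOf (fun w => E v w ∧ ¬ E w v) (WL E lab c ℓ)),
       trunc c (msetOf (fun w => ¬ (E w v ∨ E v w) ∧ w ≠ v) (WL E lab c ℓ)))

section Aux

open Finset

variable {α β γ : Type}

lemma trunc_count [DecidableEq γ] (c : ℕ) (M : Multiset γ) (g : γ) :
    (trunc c M).count g = min c (M.count g) := by
  unfold trunc
  rw [Subsingleton.elim (Classical.decEq γ) ‹DecidableEq γ›]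
  rw [Multiset.count_bind]
  rw [Multiset.map_congr rfl (fun a _ => by
    simp only [Multiset.count_replicate] :
    ∀ a ∈ M.toFinset.val, Multiset.count g (Multiset.replicate (min c (M.count a)) a)
      = if a = g then min c (M.count a) else 0)]
  rw [show (Multiset.map (fun a => if a = g then min c (M.count a) else 0) M.toFinset.val).sum
      = ∑ a ∈ M.toFinset, if a = g then min c (M.count a) else 0 from rfl]
  rw [Finset.sum_ite_eq' M.toFinset g (fun a => min c (M.count a))]
  by_cases h : g ∈ M.toFinset
  · simp [h]
  · simp only [h, if_false]
    rw [Multiset.count_eq_zero_of_notMem (by simpa using h)]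
    simp

lemma min_sum (c : ℕ) (s : Finset α) (f : α → ℕ) :
    min c (∑ a ∈ s, f a) = min c (∑ a ∈ s, min c (f a)) := by
  induction s using Finset.cons_induction with
  | empty => rfl
  | cons a s ha ih => rw [Finset.sum_cons, Finset.sum_cons]; omega

lemma natcard_filter [Fintype α] (P : α → Prop) [DecidablePred P] :
    Nat.card {a | P a} = (Finset.univ.filter P).card := by
  classical
  rw [Nat.card_coe_set_eq, Set.ncard_eq_toFinset_card', Set.toFinset_setOf]

lemma mem_msetOf [Fintype α] {p : α → Prop} [DecidablePred p] {f : α → γ} {g : γ} :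
    g ∈ msetOf p f ↔ ∃ a, p a ∧ f a = g := by
  unfold msetOf
  rw [Subsingleton.elim (Classical.decPred p) ‹DecidablePred p›]
  simp [Multiset.mem_map]

lemma count_msetOf [Fintype α] [DecidableEq γ] (p : α → Prop) [DecidablePred p] (f : α → γ)
    (g : γ) : (msetOf p f).count g = (Finset.univ.filter (fun a => p a ∧ f a = g)).card := by
  unfold msetOf
  rw [Subsingleton.elim (Classical.decPred p) ‹DecidablePred p›]
  rw [Multiset.count_map]
  rw [show Multiset.filter (fun a => g = f a) (Finset.univ.filter p).val
      = ((Finset.univ.filter p).filter (fun a => g = f a)).val from rfl]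
  rw [Finset.filter_filter]
  rw [show Finset.univ.filter (fun a => p a ∧ g = f a)
      = Finset.univ.filter (fun a => p a ∧ f a = g) from
    Finset.filter_congr (fun x _ => by tauto)]
  rfl

end Aux
section Aux2

open Finset

variable {α β γ : Type}

lemma card_filter_eq_sum [DecidableEq γ] (M : Multiset γ) (good : γ → Prop)
    [DecidablePred good] :
    Multiset.card (M.filter good) = ∑ g ∈ M.toFinset, if good g then M.count g else 0 := by
  rw [← Multiset.toFinset_sum_count_eq (M.filter good)]
  rw [Finset.sum_subset (Multiset.toFinset_subset.mpr (Multiset.subset_of_le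
      (Multiset.filter_le good M)))]
  · exact Finset.sum_congr rfl fun g _ => by rw [Multiset.count_filter]
  · intro g _ hg
    rw [Multiset.count_eq_zero_of_notMem (by simpa using hg)]

lemma count_key [Fintype α] [Fintype β] {γ : Type} [DecidableEq γ] (c : ℕ) (hc : 1 ≤ c)
    (pG : α → Prop) [DecidablePred pG] (pH : β → Prop) [DecidablePred pH]
    (fG : α → γ) (fH : β → γ) (qG : α → Prop) (qH : β → Prop)
    (htr : trunc c (msetOf pG fG) = trunc c (msetOf pH fH))
    (hcong : ∀ a b, pG a → pH b → fG a = fH b → (qG a ↔ qH b)) :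
    min c (Nat.card {a | pG a ∧ qG a}) = min c (Nat.card {b | pH b ∧ qH b}) := by
  classical
  set MG := msetOf pG fG with hMG
  set MH := msetOf pH fH with hMH
  have countmin : ∀ g, min c (MG.count g) = min c (MH.count g) := fun g => by
    have := congrArg (Multiset.count g) htr
    rwa [trunc_count, trunc_count] at this
  have supp : ∀ g, g ∈ MG ↔ g ∈ MH := fun g => by
    rw [← Multiset.count_pos, ← Multiset.count_pos]
    have := countmin g; omega
  set good : γ → Prop := fun g => ∃ b, pH b ∧ fH b = g ∧ qH b with hgood
  have claim1 : ∀ a, pG a → (qG a ↔ good (fG a)) := by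
    intro a ha
    constructor
    · intro hq
      have : fG a ∈ MH := (supp _).mp (mem_msetOf.mpr ⟨a, ha, rfl⟩)
      obtain ⟨b, hb, hfb⟩ := mem_msetOf.mp this
      exact ⟨b, hb, hfb, ((hcong a b ha hb hfb.symm).mp hq)⟩
    · rintro ⟨b, hb, hfb, hq⟩
      exact (hcong a b ha hb hfb.symm).mpr hq
  have claim2 : ∀ b, pH b → (qH b ↔ good (fH b)) := by
    intro b hb
    constructor
    · intro hq; exact ⟨b, hb, rfl, hq⟩
    · rintro ⟨b', hb', hfb', hq⟩
      have : fH b ∈ MG := (supp _).mpr (mem_msetOf.mpr ⟨b, hb, rfl⟩)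
      obtain ⟨a, ha, hfa⟩ := mem_msetOf.mp this
      exact (hcong a b ha hb hfa).mp ((hcong a b' ha hb' (hfa.trans hfb'.symm)).mpr hq)
  -- rewrite the two cardinalities as multiset filter cards
  have cardG : Nat.card {a | pG a ∧ qG a} = Multiset.card (MG.filter good) := by
    rw [natcard_filter]
    rw [hMG]; unfold msetOf
    rw [Subsingleton.elim (Classical.decPred pG) ‹DecidablePred pG›]
    rw [Multiset.filter_map]
    rw [Multiset.card_map]
    rw [show Multiset.filter (good ∘ fG) (Finset.univ.filter pG).val
        = ((Finset.univ.filter pG).filter (good ∘ fG)).val from rfl]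
    rw [show Multiset.card ((Finset.univ.filter pG).filter (good ∘ fG)).val
        = ((Finset.univ.filter pG).filter (good ∘ fG)).card from rfl]
    rw [Finset.filter_filter]
    congr 1
    exact Finset.filter_congr fun a _ => by
      simp only [Function.comp]
      constructor
      · rintro ⟨h1, h2⟩; exact ⟨h1, (claim1 a h1).mp h2⟩
      · rintro ⟨h1, h2⟩; exact ⟨h1, (claim1 a h1).mpr h2⟩
  have cardH : Nat.card {b | pH b ∧ qH b} = Multiset.card (MH.filter good) := by
    rw [natcard_filter]
    rw [hMH]; unfold msetOf
    rw [Subsingleton.elim (Classical.decPred pH) ‹DecidablePred pH›]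
    rw [Multiset.filter_map, Multiset.card_map]
    rw [show Multiset.filter (good ∘ fH) (Finset.univ.filter pH).val
        = ((Finset.univ.filter pH).filter (good ∘ fH)).val from rfl]
    rw [show Multiset.card ((Finset.univ.filter pH).filter (good ∘ fH)).val
        = ((Finset.univ.filter pH).filter (good ∘ fH)).card from rfl]
    rw [Finset.filter_filter]
    congr 1
    exact Finset.filter_congr fun b _ => by
      simp only [Function.comp]
      constructor
      · rintro ⟨h1, h2⟩; exact ⟨h1, (claim2 b h1).mp h2⟩
      · rintro ⟨h1, h2⟩; exact ⟨h1, (claim2 b h1).mpr h2⟩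
  rw [cardG, cardH, card_filter_eq_sum, card_filter_eq_sum]
  have hfin : MG.toFinset = MH.toFinset := Finset.ext fun g => by
    simp only [Multiset.mem_toFinset]; exact supp g
  rw [hfin, min_sum, min_sum c MH.toFinset (fun g => if good g then Multiset.count g MH else 0)]
  refine congrArg (min c) (Finset.sum_congr rfl fun g _ => ?_)
  by_cases hg : good g
  · simp only [hg, if_true]; exact countmin g
  · simp [hg]
end Aux2
section Classes

variable {α : Type}

/-- the four adjacency classes relative to a centre `v` -/
def clsP (j : ℕ) (E : α → α → Prop) (v w : α) : Prop :=
  match j with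
  | 0 => E w v ∧ E v w
  | 1 => E w v ∧ ¬ E v w
  | 2 => E v w ∧ ¬ E w v
  | 3 => ¬ (E w v ∨ E v w) ∧ w ≠ v
  | _ => False

lemma WL_succ {d : ℕ} {V : Type} [Fintype V] (E : V → V → Prop) (lab : V → Fin d → Bool)
    (c ℓ : ℕ) (v : V) :
    WL E lab c (ℓ+1) v = (WL E lab c ℓ v,
      trunc c (msetOf (clsP 0 E v) (WL E lab c ℓ)),
      trunc c (msetOf (clsP 1 E v) (WL E lab c ℓ)),
      trunc c (msetOf (clsP 2 E v) (WL E lab c ℓ)),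
      trunc c (msetOf (clsP 3 E v) (WL E lab c ℓ))) := rfl

lemma WL_zero {d : ℕ} {V : Type} [Fintype V] (E : V → V → Prop) (lab : V → Fin d → Bool)
    (c : ℕ) (v : V) : WL E lab c 0 v = lab v := rfl

lemma WL_mono {d : ℕ} {V W : Type} [Fintype V] [Fintype W]
    (EG : V → V → Prop) (labG : V → Fin d → Bool)
    (EH : W → W → Prop) (labH : W → Fin d → Bool) (c : ℕ) :
    ∀ (ℓ m : ℕ), m ≤ ℓ → ∀ (u : V) (v : W),
      WL EG labG c ℓ u = WL EH labH c ℓ v → WL EG labG c m u = WL EH labH c m v := by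
  intro ℓ
  induction ℓ with
  | zero => intro m hm u v h; interval_cases m; exact h
  | succ ℓ ih =>
    intro m hm u v h
    rcases Nat.lt_or_ge m (ℓ+1) with hlt | hge
    · have h1 : WL EG labG c ℓ u = WL EH labH c ℓ v := by
        rw [WL_succ, WL_succ] at h
        exact congrArg Prod.fst h
      exact ih m (Nat.lt_succ_iff.mp hlt) u v h1
    · have : m = ℓ + 1 := le_antisymm hm hge
      subst this; exact h

lemma clsP_ne {j : ℕ} {E : α → α → Prop} (hirr : ∀ x, ¬ E x x) {v w : α}
    (h : clsP j E v w) : w ≠ v := by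
  rcases j with _|_|_|_|j
  · rintro rfl; exact hirr _ h.1
  · rintro rfl; exact hirr _ h.1
  · rintro rfl; exact hirr _ h.1
  · exact h.2
  · exact h.elim

lemma clsP_edges {β : Type} {j : ℕ} {E : α → α → Prop} {E' : β → β → Prop}
    {v w : α} {v' w' : β} (h : clsP j E v w) (h' : clsP j E' v' w') :
    (E w v ↔ E' w' v') ∧ (E v w ↔ E' v' w') := by
  rcases j with _|_|_|_|j
  · exact ⟨iff_of_true h.1 h'.1, iff_of_true h.2 h'.2⟩
  · exact ⟨iff_of_true h.1 h'.1, iff_of_false h.2 h'.2⟩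
  · exact ⟨iff_of_false h.2 h'.2, iff_of_true h.1 h'.1⟩
  · constructor
    · exact iff_of_false (fun hc => h.1 (Or.inl hc)) (fun hc => h'.1 (Or.inl hc))
    · exact iff_of_false (fun hc => h.1 (Or.inr hc)) (fun hc => h'.1 (Or.inr hc))
  · exact h.elim

open Classical in
noncomputable def clsFun (E : α → α → Prop) (v w : α) : ℕ :=
  if clsP 0 E v w then 0 else if clsP 1 E v w then 1 else if clsP 2 E v w then 2
  else if w = v then 4 else 3

lemma clsFun_le (E : α → α → Prop) (v w : α) : clsFun E v w < 5 := by
  unfold clsFun; split_ifs <;> omega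

lemma clsFun_eq {E : α → α → Prop} (v w : α) {j : ℕ} (hj : j < 4) :
    clsFun E v w = j ↔ clsP j E v w := by
  unfold clsFun
  interval_cases j <;> split_ifs with h0 h1 h2 h3 <;>
    simp_all [clsP] <;> tauto

lemma clsFun_eq4 {E : α → α → Prop} (hirr : ∀ x, ¬ E x x) (v w : α) :
    clsFun E v w = 4 ↔ w = v := by
  unfold clsFun
  split_ifs with h0 h1 h2 h3 <;> simp_all [clsP] <;>
    (try rintro rfl) <;> first | (exact hirr _ (by tauto)) | tauto

end Classes
section KeyCount

lemma filter_and_eq_card {β : Type} [Fintype β] [DecidableEq β] (T : β → Prop)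
    [DecidablePred T] (q : β) :
    (Finset.univ.filter (fun u => T u ∧ u = q)).card = if T q then 1 else 0 := by
  have : Finset.univ.filter (fun u => T u ∧ u = q) = if T q then {q} else ∅ := by
    ext u
    simp only [Finset.mem_filter, Finset.mem_univ, true_and]
    split_ifs with h <;> simp <;> aesop
  rw [this]; split_ifs <;> simp

lemma key_count {d : ℕ} {V W : Type} [Fintype V] [Fintype W]
    (EG : V → V → Prop) (labG : V → Fin d → Bool) (hG : ∀ v, ¬ EG v v)
    (EH : W → W → Prop) (labH : W → Fin d → Bool) (hH : ∀ w, ¬ EH w w)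
    (c ℓ : ℕ) (hc1 : 1 ≤ c) (p : V) (p' : W)
    (hcolp : WL EG labG c (ℓ+1) p = WL EH labH c (ℓ+1) p')
    (SG : V → Prop) (SH : W → Prop)
    (hS : ∀ (u' : V) (v' : W), WL EG labG c ℓ u' = WL EH labH c ℓ v' →
        (u' = p ↔ v' = p') → (EG u' p ↔ EH v' p') → (EG p u' ↔ EH p' v') → (SG u' ↔ SH v')) :
    min c (Nat.card {u' | SG u'}) = min c (Nat.card {v' | SH v'}) := by
  classical
  rw [WL_succ, WL_succ] at hcolp
  have h0 := congrArg Prod.fst hcolp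
  have h1 := congrArg (fun x : _ × _ × _ × _ × _ => x.2.1) hcolp
  have h2 := congrArg (fun x : _ × _ × _ × _ × _ => x.2.2.1) hcolp
  have h3 := congrArg (fun x : _ × _ × _ × _ × _ => x.2.2.2.1) hcolp
  have h4 := congrArg (fun x : _ × _ × _ × _ × _ => x.2.2.2.2) hcolp
  simp only at h0 h1 h2 h3 h4
  have hfibG : ∀ j, j < 4 →
      (Finset.univ.filter (fun u' => SG u' ∧ clsFun EG p u' = j)).card
        = Nat.card {u' | clsP j EG p u' ∧ SG u'} := by
    intro j hj
    rw [natcard_filter]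
    congr 1
    exact Finset.filter_congr fun u' _ => by rw [clsFun_eq _ _ hj]; tauto
  have hfibH : ∀ j, j < 4 →
      (Finset.univ.filter (fun v' => SH v' ∧ clsFun EH p' v' = j)).card
        = Nat.card {v' | clsP j EH p' v' ∧ SH v'} := by
    intro j hj
    rw [natcard_filter]
    congr 1
    exact Finset.filter_congr fun v' _ => by rw [clsFun_eq _ _ hj]; tauto
  have hcong : ∀ j, ∀ (a' : V) (b' : W), clsP j EG p a' → clsP j EH p' b' →
      WL EG labG c ℓ a' = WL EH labH c ℓ b' → (SG a' ↔ SH b') := by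
    intro j a' b' hpa hpb hf
    exact hS a' b' hf (iff_of_false (clsP_ne hG hpa) (clsP_ne hH hpb))
      (clsP_edges hpa hpb).1 (clsP_edges hpa hpb).2
  have fib : ∀ j ∈ Finset.range 5,
      min c ((Finset.univ.filter (fun u' => SG u' ∧ clsFun EG p u' = j)).card)
        = min c ((Finset.univ.filter (fun v' => SH v' ∧ clsFun EH p' v' = j)).card) := by
    intro j hj
    rw [Finset.mem_range] at hj
    rcases Nat.lt_or_ge j 4 with hj4 | hj4
    · rw [hfibG j hj4, hfibH j hj4]
      interval_cases j
      · exact count_key c hc1 _ _ _ _ _ _ h1 (hcong 0)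
      · exact count_key c hc1 _ _ _ _ _ _ h2 (hcong 1)
      · exact count_key c hc1 _ _ _ _ _ _ h3 (hcong 2)
      · exact count_key c hc1 _ _ _ _ _ _ h4 (hcong 3)
    · have hj5 : j = 4 := by omega
      subst hj5
      have eG : (Finset.univ.filter (fun u' => SG u' ∧ clsFun EG p u' = 4)).card
          = if SG p then 1 else 0 := by
        rw [show (Finset.univ.filter (fun u' => SG u' ∧ clsFun EG p u' = 4))
            = (Finset.univ.filter (fun u' => SG u' ∧ u' = p)) from
          Finset.filter_congr fun u' _ => by rw [clsFun_eq4 hG]]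
        exact filter_and_eq_card SG p
      have eH : (Finset.univ.filter (fun v' => SH v' ∧ clsFun EH p' v' = 4)).card
          = if SH p' then 1 else 0 := by
        rw [show (Finset.univ.filter (fun v' => SH v' ∧ clsFun EH p' v' = 4))
            = (Finset.univ.filter (fun v' => SH v' ∧ v' = p')) from
          Finset.filter_congr fun v' _ => by rw [clsFun_eq4 hH]]
        exact filter_and_eq_card SH p'
      rw [eG, eH]
      have : SG p ↔ SH p' := hS p p' h0 (by simp) (iff_of_false (hG p) (hH p'))
        (iff_of_false (hG p) (hH p'))
      simp [this]
  rw [natcard_filter SG, natcard_filter SH]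
  rw [Finset.card_eq_sum_card_fiberwise
    (f := clsFun EG p) (t := Finset.range 5)
    (fun x _ => Finset.mem_range.mpr (clsFun_le EG p x))]
  rw [Finset.card_eq_sum_card_fiberwise
    (f := clsFun EH p') (t := Finset.range 5)
    (fun x _ => Finset.mem_range.mpr (clsFun_le EH p' x))]
  simp only [Finset.filter_filter]
  rw [min_sum]
  conv_rhs => rw [min_sum]
  exact congrArg (min c) (Finset.sum_congr rfl fun j hj => fib j hj)

end KeyCount
section Sound

lemma sound {d : ℕ} {V W : Type} [Fintype V] [Fintype W]
    (EG : V → V → Prop) (labG : V → Fin d → Bool) (hG : ∀ v, ¬ EG v v)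
    (EH : W → W → Prop) (labH : W → Fin d → Bool) (hH : ∀ w, ¬ EH w w) (c : ℕ) :
    ∀ (φ : C2 d) (a : C2Var → V) (b : C2Var → W), φ.rank ≤ c →
    (∀ t, WL EG labG c φ.depth (a t) = WL EH labH c φ.depth (b t)) →
    (∀ s t : C2Var, a s = a t ↔ b s = b t) →
    (∀ s t : C2Var, EG (a s) (a t) ↔ EH (b s) (b t)) →
    (C2.sat EG labG φ a ↔ C2.sat EH labH φ b) := by
  intro φ
  induction φ with
  | eq s t =>
    intro a b _ _ heq _
    simpa [C2.sat] using heq s t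
  | edge s t =>
    intro a b _ _ _ hE
    simpa [C2.sat] using hE s t
  | pred i s =>
    intro a b _ hcol _ _
    have h0 : labG (a s) = labH (b s) := hcol s
    simp [C2.sat, h0]
  | not φ ih =>
    intro a b hr hcol heq hE
    simp only [C2.sat]
    rw [ih a b hr hcol heq hE]
  | and φ ψ ihφ ihψ =>
    intro a b hr hcol heq hE
    simp only [C2.sat]
    rw [ihφ a b (le_trans (le_max_left _ _) hr)
        (fun t => WL_mono EG labG EH labH c _ _ (le_max_left φ.depth ψ.depth) _ _ (hcol t))
        heq hE,
      ihψ a b (le_trans (le_max_right _ _) hr)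
        (fun t => WL_mono EG labG EH labH c _ _ (le_max_right φ.depth ψ.depth) _ _ (hcol t))
        heq hE]
  | or φ ψ ihφ ihψ =>
    intro a b hr hcol heq hE
    simp only [C2.sat]
    rw [ihφ a b (le_trans (le_max_left _ _) hr)
        (fun t => WL_mono EG labG EH labH c _ _ (le_max_left φ.depth ψ.depth) _ _ (hcol t))
        heq hE,
      ihψ a b (le_trans (le_max_right _ _) hr)
        (fun t => WL_mono EG labG EH labH c _ _ (le_max_right φ.depth ψ.depth) _ _ (hcol t))
        heq hE]
  | exN k w ψ ih =>
    intro a b hr hcol heq hE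
    simp only [C2.sat]
    have hk : k ≤ c := le_trans (le_max_left _ _) hr
    have hrψ : ψ.rank ≤ c := le_trans (le_max_right _ _) hr
    rcases Nat.eq_zero_or_pos k with rfl | hk1
    · simp
    have hc1 : 1 ≤ c := le_trans hk1 hk
    have main : min c (Nat.card {u' : V | C2.sat EG labG ψ (Function.update a w u')})
        = min c (Nat.card {v' : W | C2.sat EH labH ψ (Function.update b w v')}) := by
      cases w with
      | x =>
        refine key_count EG labG hG EH labH hH c ψ.depth hc1 (a C2Var.y) (b C2Var.y)
          (hcol C2Var.y) _ _ ?_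
        intro u' v' hf hne hEup hEpu
        have e1 : Function.update a C2Var.x u' C2Var.x = u' := by simp
        have e2 : Function.update a C2Var.x u' C2Var.y = a C2Var.y := by simp
        have f1 : Function.update b C2Var.x v' C2Var.x = v' := by simp
        have f2 : Function.update b C2Var.x v' C2Var.y = b C2Var.y := by simp
        refine ih (Function.update a C2Var.x u') (Function.update b C2Var.x v') hrψ ?_ ?_ ?_
        · intro t
          cases t
          · rw [e1, f1]; exact hf
          · rw [e2, f2]
            exact WL_mono EG labG EH labH c _ _ (Nat.le_succ _) _ _ (hcol C2Var.y)
        · intro s t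
          cases s <;> cases t
          · rw [e1, f1]; simp
          · rw [e1, e2, f1, f2]; exact hne
          · rw [e1, e2, f1, f2]
            exact ⟨fun h => (hne.mp h.symm).symm, fun h => (hne.mpr h.symm).symm⟩
          · rw [e2, f2]; simp
        · intro s t
          cases s <;> cases t
          · rw [e1, f1]; exact iff_of_false (hG u') (hH v')
          · rw [e1, e2, f1, f2]; exact hEup
          · rw [e1, e2, f1, f2]; exact hEpu
          · rw [e2, f2]; exact iff_of_false (hG _) (hH _)
      | y =>
        refine key_count EG labG hG EH labH hH c ψ.depth hc1 (a C2Var.x) (b C2Var.x)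
          (hcol C2Var.x) _ _ ?_
        intro u' v' hf hne hEup hEpu
        have e1 : Function.update a C2Var.y u' C2Var.x = a C2Var.x := by simp
        have e2 : Function.update a C2Var.y u' C2Var.y = u' := by simp
        have f1 : Function.update b C2Var.y v' C2Var.x = b C2Var.x := by simp
        have f2 : Function.update b C2Var.y v' C2Var.y = v' := by simp
        refine ih (Function.update a C2Var.y u') (Function.update b C2Var.y v') hrψ ?_ ?_ ?_
        · intro t
          cases t
          · rw [e1, f1]
            exact WL_mono EG labG EH labH c _ _ (Nat.le_succ _) _ _ (hcol C2Var.x)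
          · rw [e2, f2]; exact hf
        · intro s t
          cases s <;> cases t
          · rw [e1, f1]; simp
          · rw [e1, e2, f1, f2]
            exact ⟨fun h => (hne.mp h.symm).symm, fun h => (hne.mpr h.symm).symm⟩
          · rw [e1, e2, f1, f2]; exact hne
          · rw [e2, f2]; simp
        · intro s t
          cases s <;> cases t
          · rw [e1, f1]; exact iff_of_false (hG _) (hH _)
          · rw [e1, e2, f1, f2]; exact hEpu
          · rw [e1, e2, f1, f2]; exact hEup
          · rw [e2, f2]; exact iff_of_false (hG _) (hH _)
    omega

end Sound
section CharDef

def C2Var.other : C2Var → C2Var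
  | .x => .y
  | .y => .x

lemma C2Var.other_ne (s : C2Var) : s.other ≠ s := by cases s <;> simp [other]

def bigAnd {d : ℕ} (base : C2 d) : List (C2 d) → C2 d
  | [] => base
  | φ :: l => .and φ (bigAnd base l)

lemma sat_bigAnd {d : ℕ} {V : Type} [Fintype V] (E : V → V → Prop) (lab : V → Fin d → Bool)
    (base : C2 d) (l : List (C2 d)) (a : C2Var → V) :
    C2.sat E lab (bigAnd base l) a ↔
      C2.sat E lab base a ∧ ∀ φ ∈ l, C2.sat E lab φ a := by
  induction l with
  | nil => simp [bigAnd]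
  | cons φ l ih =>
    simp only [bigAnd, C2.sat, ih, List.mem_cons]
    constructor
    · rintro ⟨h1, h2, h3⟩; exact ⟨h2, fun ψ hψ => by rcases hψ with rfl | hψ; exacts [h1, h3 ψ hψ]⟩
    · rintro ⟨h1, h2⟩; exact ⟨h2 φ (Or.inl rfl), h1, fun ψ hψ => h2 ψ (Or.inr hψ)⟩

lemma bigAnd_depth {d : ℕ} (base : C2 d) (l : List (C2 d)) (n : ℕ) (hb : base.depth ≤ n)
    (hl : ∀ φ ∈ l, C2.depth φ ≤ n) : (bigAnd base l).depth ≤ n := by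
  induction l with
  | nil => exact hb
  | cons φ l ih =>
    simp only [bigAnd, C2.depth, max_le_iff]
    exact ⟨hl φ (by simp), ih fun ψ hψ => hl ψ (by simp [hψ])⟩

lemma bigAnd_rank {d : ℕ} (base : C2 d) (l : List (C2 d)) (n : ℕ) (hb : base.rank ≤ n)
    (hl : ∀ φ ∈ l, C2.rank φ ≤ n) : (bigAnd base l).rank ≤ n := by
  induction l with
  | nil => exact hb
  | cons φ l ih =>
    simp only [bigAnd, C2.rank, max_le_iff]
    exact ⟨hl φ (by simp), ih fun ψ hψ => hl ψ (by simp [hψ])⟩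

lemma bigAnd_freeVars {d : ℕ} (base : C2 d) (l : List (C2 d)) (S : Finset C2Var)
    (hb : base.freeVars ⊆ S) (hl : ∀ φ ∈ l, C2.freeVars φ ⊆ S) :
    (bigAnd base l).freeVars ⊆ S := by
  induction l with
  | nil => exact hb
  | cons φ l ih =>
    simp only [bigAnd, C2.freeVars, Finset.union_subset_iff]
    exact ⟨hl φ (by simp), ih fun ψ hψ => hl ψ (by simp [hψ])⟩

def classAtom {d : ℕ} (j : ℕ) (s t : C2Var) : C2 d :=
  match j with
  | 0 => .and (.edge t s) (.edge s t)
  | 1 => .and (.edge t s) (.not (.edge s t))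
  | 2 => .and (.edge s t) (.not (.edge t s))
  | 3 => .and (.not (.or (.edge t s) (.edge s t))) (.not (.eq t s))
  | _ => .not (.eq s s)

lemma sat_classAtom {d : ℕ} {V : Type} [Fintype V] (E : V → V → Prop)
    (lab : V → Fin d → Bool) (j : ℕ) (s t : C2Var) (a : C2Var → V) :
    C2.sat E lab (classAtom j s t) a ↔ clsP j E (a s) (a t) := by
  rcases j with _|_|_|_|j <;> simp [classAtom, clsP, C2.sat]

lemma classAtom_depth {d : ℕ} (j : ℕ) (s t : C2Var) : (classAtom j s t : C2 d).depth = 0 := by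
  rcases j with _|_|_|_|j <;> simp [classAtom, C2.depth]

lemma classAtom_rank {d : ℕ} (j : ℕ) (s t : C2Var) : (classAtom j s t : C2 d).rank = 0 := by
  rcases j with _|_|_|_|j <;> simp [classAtom, C2.rank]

lemma classAtom_freeVars {d : ℕ} (j : ℕ) (s t : C2Var) :
    (classAtom j s t : C2 d).freeVars ⊆ {s, t} := by
  rcases j with _|_|_|_|j <;> simp [classAtom, C2.freeVars] <;>
    first
      | (intro a ha; simp at ha ⊢; tauto)
      | (apply Finset.union_subset <;> intro a ha <;> simp at ha ⊢ <;> tauto)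

noncomputable def mcount {γ : Type} (M : Multiset γ) (g : γ) : ℕ :=
  letI := Classical.decEq γ; Multiset.count g M

lemma mcount_eq {γ : Type} [inst : DecidableEq γ] (M : Multiset γ) (g : γ) :
    mcount M g = Multiset.count g M := by
  unfold mcount
  exact congrArg (fun i => @Multiset.count γ i g M) (Subsingleton.elim _ _)

variable {d : ℕ} {V : Type} [Fintype V]

noncomputable def charForm (EG : V → V → Prop) (labG : V → Fin d → Bool) (c : ℕ) :
    ℕ → V → C2Var → C2 d
  | 0, u, s => bigAnd (.eq s s)
      ((List.finRange d).map fun i =>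
        if labG u i = true then .pred i s else .not (.pred i s))
  | (ℓ+1), u, s =>
    if c = 0 then charForm EG labG c ℓ u s else
    bigAnd (charForm EG labG c ℓ u s)
      ((List.range 4).flatMap fun j =>
        (Finset.univ.toList.map fun w : V =>
          C2.exN (min c (mcount (msetOf (clsP j EG u) (WL EG labG c ℓ)) (WL EG labG c ℓ w)))
            s.other (.and (classAtom j s s.other) (charForm EG labG c ℓ w s.other)))
        ++ (Finset.univ.toList.map fun w : V =>
          if min c (mcount (msetOf (clsP j EG u) (WL EG labG c ℓ)) (WL EG labG c ℓ w)) < c then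
            C2.not (.exN
              (min c (mcount (msetOf (clsP j EG u) (WL EG labG c ℓ)) (WL EG labG c ℓ w)) + 1)
              s.other (.and (classAtom j s s.other) (charForm EG labG c ℓ w s.other)))
          else .eq s s)
        ++ [C2.not (.exN 1 s.other (bigAnd (classAtom j s s.other)
              (Finset.univ.toList.map fun w : V => C2.not (charForm EG labG c ℓ w s.other))))])

lemma charForm_depth (EG : V → V → Prop) (labG : V → Fin d → Bool) (c : ℕ) :
    ∀ (ℓ : ℕ) (u : V) (s : C2Var), (charForm EG labG c ℓ u s).depth ≤ ℓ := by
  intro ℓ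
  induction ℓ with
  | zero =>
    intro u s
    refine bigAnd_depth _ _ _ (by simp [C2.depth]) ?_
    intro φ hφ
    simp only [List.mem_map] at hφ
    obtain ⟨i, _, rfl⟩ := hφ
    split_ifs <;> simp [C2.depth]
  | succ ℓ ih =>
    intro u s
    rw [charForm]
    split_ifs with hc
    · exact le_trans (ih u s) (Nat.le_succ ℓ)
    refine bigAnd_depth _ _ _ (le_trans (ih u s) (Nat.le_succ ℓ)) ?_
    intro φ hφ
    simp only [List.mem_flatMap, List.mem_append, List.mem_map, List.mem_singleton,
      List.mem_range] at hφ
    obtain ⟨j, _, (⟨w, _, rfl⟩ | ⟨w, _, rfl⟩) | rfl⟩ := hφ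
    · simp only [C2.depth, Nat.add_le_add_iff_right, max_le_iff]
      exact ⟨by simp [classAtom_depth], ih w s.other⟩
    · split_ifs
      · simp only [C2.depth, Nat.add_le_add_iff_right, max_le_iff]
        exact ⟨by simp [classAtom_depth], ih w s.other⟩
      · simp [C2.depth]
    · simp only [C2.depth, Nat.add_le_add_iff_right]
      refine bigAnd_depth _ _ _ (by simp [classAtom_depth]) ?_
      intro ψ hψ
      simp only [List.mem_map] at hψ
      obtain ⟨w, _, rfl⟩ := hψ
      exact ih w s.other

lemma charForm_rank (EG : V → V → Prop) (labG : V → Fin d → Bool) (c : ℕ) :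
    ∀ (ℓ : ℕ) (u : V) (s : C2Var), (charForm EG labG c ℓ u s).rank ≤ c := by
  intro ℓ
  induction ℓ with
  | zero =>
    intro u s
    refine bigAnd_rank _ _ _ (by simp [C2.rank]) ?_
    intro φ hφ
    simp only [List.mem_map] at hφ
    obtain ⟨i, _, rfl⟩ := hφ
    split_ifs <;> simp [C2.rank]
  | succ ℓ ih =>
    intro u s
    rw [charForm]
    split_ifs with hc
    · exact ih u s
    have hc1 : 1 ≤ c := Nat.one_le_iff_ne_zero.mpr hc
    refine bigAnd_rank _ _ _ (ih u s) ?_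
    intro φ hφ
    simp only [List.mem_flatMap, List.mem_append, List.mem_map, List.mem_singleton,
      List.mem_range] at hφ
    obtain ⟨j, _, (⟨w, _, rfl⟩ | ⟨w, _, rfl⟩) | rfl⟩ := hφ
    · simp only [C2.rank, max_le_iff]
      exact ⟨by omega, by simp [classAtom_rank], ih w s.other⟩
    · split_ifs with h
      · simp only [C2.rank, max_le_iff]
        exact ⟨by omega, by simp [classAtom_rank], ih w s.other⟩
      · simp [C2.rank]
    · simp only [C2.rank, max_le_iff]
      refine ⟨hc1, ?_⟩
      refine bigAnd_rank _ _ _ (by simp [classAtom_rank]) ?_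
      intro ψ hψ
      simp only [List.mem_map] at hψ
      obtain ⟨w, _, rfl⟩ := hψ
      exact ih w s.other

lemma charForm_freeVars (EG : V → V → Prop) (labG : V → Fin d → Bool) (c : ℕ) :
    ∀ (ℓ : ℕ) (u : V) (s : C2Var), (charForm EG labG c ℓ u s).freeVars ⊆ {s} := by
  intro ℓ
  induction ℓ with
  | zero =>
    intro u s
    refine bigAnd_freeVars _ _ _ (by simp [C2.freeVars]) ?_
    intro φ hφ
    simp only [List.mem_map] at hφ
    obtain ⟨i, _, rfl⟩ := hφ
    split_ifs <;> simp [C2.freeVars]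
  | succ ℓ ih =>
    intro u s
    rw [charForm]
    split_ifs with hc
    · exact ih u s
    refine bigAnd_freeVars _ _ _ (ih u s) ?_
    intro φ hφ
    simp only [List.mem_flatMap, List.mem_append, List.mem_map, List.mem_singleton,
      List.mem_range] at hφ
    have herase : ∀ F : Finset C2Var, F ⊆ {s, s.other} → F.erase s.other ⊆ {s} := by
      intro F h x hx
      have h1 := Finset.ne_of_mem_erase hx
      have h2 := h (Finset.mem_of_mem_erase hx)
      simp only [Finset.mem_insert, Finset.mem_singleton] at h2 ⊢
      tauto
    have hsub : ∀ (w : V) (j : ℕ),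
        (C2.and (classAtom j s s.other) (charForm EG labG c ℓ w s.other) : C2 d).freeVars
          ⊆ {s, s.other} := by
      intro w j
      simp only [C2.freeVars]
      refine Finset.union_subset (classAtom_freeVars j s s.other) ?_
      exact (ih w s.other).trans (by intro x hx; simp at hx ⊢; tauto)
    obtain ⟨j, _, (⟨w, _, rfl⟩ | ⟨w, _, rfl⟩) | rfl⟩ := hφ
    · exact herase _ (hsub w j)
    · split_ifs
      · exact herase _ (hsub w j)
      · simp [C2.freeVars]
    · simp only [C2.freeVars]
      refine herase _ ?_
      refine bigAnd_freeVars _ _ _ ((classAtom_freeVars j s s.other)) ?_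
      intro ψ hψ
      simp only [List.mem_map] at hψ
      obtain ⟨w, _, rfl⟩ := hψ
      simp only [C2.freeVars]
      exact (ih w s.other).trans (by intro x hx; simp at hx ⊢; tauto)

end CharDef
section TruncIff

lemma trunc_zero {γ : Type} (M : Multiset γ) : trunc 0 M = 0 := by
  classical
  ext g
  rw [trunc_count]
  simp

lemma trunc_ext {γ : Type} [DecidableEq γ] {c : ℕ} {M N : Multiset γ}
    (h : ∀ g, min c (Multiset.count g M) = min c (Multiset.count g N)) :
    trunc c M = trunc c N := by
  ext g
  rw [trunc_count, trunc_count]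
  exact h g

lemma trunc_eq_iff {γ V' W' : Type} [Fintype V'] [Fintype W'] [DecidableEq γ]
    (c : ℕ) (hc1 : 1 ≤ c) (pG : V' → Prop) (pH : W' → Prop)
    [DecidablePred pG] [DecidablePred pH] (col : V' → γ) (colH : W' → γ) :
    ((∀ w : V', min c (Multiset.count (col w) (msetOf pG col))
        ≤ Multiset.count (col w) (msetOf pH colH)) ∧
     (∀ w : V', min c (Multiset.count (col w) (msetOf pG col)) < c →
        Multiset.count (col w) (msetOf pH colH)
          ≤ min c (Multiset.count (col w) (msetOf pG col))) ∧
     (∀ w' : W', pH w' → ∃ w : V', colH w' = col w)) ↔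
      trunc c (msetOf pH colH) = trunc c (msetOf pG col) := by
  set MG := msetOf pG col with hMG
  set MH := msetOf pH colH with hMH
  constructor
  · rintro ⟨hA, hB, hC⟩
    refine trunc_ext fun g => ?_
    by_cases hg : ∃ w : V', col w = g
    · obtain ⟨w, rfl⟩ := hg
      have h1 := hA w
      have h2 := hB w
      omega
    · have hG0 : Multiset.count g MG = 0 := by
        rw [Multiset.count_eq_zero]
        intro hmem
        obtain ⟨w, _, hw⟩ := mem_msetOf.mp hmem
        exact hg ⟨w, hw⟩
      have hH0 : Multiset.count g MH = 0 := by
        rw [Multiset.count_eq_zero]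
        intro hmem
        obtain ⟨w', hw', hw⟩ := mem_msetOf.mp hmem
        obtain ⟨w, hw2⟩ := hC w' hw'
        exact hg ⟨w, by rw [← hw2, hw]⟩
      rw [hG0, hH0]
  · intro htr
    have hcnt : ∀ g, min c (Multiset.count g MH) = min c (Multiset.count g MG) := fun g => by
      have := congrArg (Multiset.count g) htr
      rwa [trunc_count, trunc_count] at this
    refine ⟨fun w => ?_, fun w h => ?_, fun w' hw' => ?_⟩
    · have := hcnt (col w); omega
    · have := hcnt (col w); omega
    · have hm : colH w' ∈ MH := mem_msetOf.mpr ⟨w', hw', rfl⟩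
      have h1 : 0 < Multiset.count (colH w') MH := Multiset.count_pos.mpr hm
      have h2 := hcnt (colH w')
      have h3 : 0 < Multiset.count (colH w') MG := by omega
      obtain ⟨w, _, hw⟩ := mem_msetOf.mp (Multiset.count_pos.mp h3)
      exact ⟨w, hw.symm⟩

end TruncIff
section CharSpec

lemma natcard_count {β γ : Type} [Fintype β] [DecidableEq γ] (p : β → Prop) [DecidablePred p]
    (f : β → γ) (g : γ) :
    Nat.card {b | p b ∧ f b = g} = Multiset.count g (msetOf p f) := by
  rw [natcard_filter]
  rw [show Multiset.count g (msetOf p f) = (msetOf p f).count g from rfl, count_msetOf]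

lemma natcard_zero_iff {β : Type} [Fintype β] (P : β → Prop) [DecidablePred P] :
    Nat.card {b | P b} = 0 ↔ ∀ b, ¬ P b := by
  rw [natcard_filter, Finset.card_eq_zero, Finset.filter_eq_empty_iff]
  simp

lemma WLC_succ_eq_iff {d ℓ : ℕ} (a a' : WLC d ℓ) (m1 m2 m3 m4 n1 n2 n3 n4 : Multiset (WLC d ℓ)) :
    ((a, m1, m2, m3, m4) : WLC d (ℓ+1)) = ((a', n1, n2, n3, n4) : WLC d (ℓ+1)) ↔
      (a = a' ∧ m1 = n1 ∧ m2 = n2 ∧ m3 = n3 ∧ m4 = n4) := by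
  constructor
  · intro h
    exact ⟨congrArg (fun x : _ × _ × _ × _ × _ => x.1) h,
      congrArg (fun x : _ × _ × _ × _ × _ => x.2.1) h,
      congrArg (fun x : _ × _ × _ × _ × _ => x.2.2.1) h,
      congrArg (fun x : _ × _ × _ × _ × _ => x.2.2.2.1) h,
      congrArg (fun x : _ × _ × _ × _ × _ => x.2.2.2.2) h⟩
  · rintro ⟨h1, h2, h3, h4, h5⟩
    show ((a, m1, m2, m3, m4) : (WLC d ℓ) × Multiset (WLC d ℓ) × Multiset (WLC d ℓ) ×
      Multiset (WLC d ℓ) × Multiset (WLC d ℓ)) = (a', n1, n2, n3, n4)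
    rw [h1, h2, h3, h4, h5]

lemma charForm_spec {d : ℕ} {V : Type} [Fintype V] (EG : V → V → Prop)
    (labG : V → Fin d → Bool) (c : ℕ) :
    ∀ (ℓ : ℕ) (u : V) (s : C2Var) {W' : Type} [Fintype W'] (EH : W' → W' → Prop)
      (labH : W' → Fin d → Bool) (b : C2Var → W'),
      C2.sat EH labH (charForm EG labG c ℓ u s) b ↔
        WL EH labH c ℓ (b s) = WL EG labG c ℓ u := by
  intro ℓ
  induction ℓ with
  | zero =>
    intro u s W' _ EH labH b
    rw [charForm, sat_bigAnd]
    rw [show (WL EH labH c 0 (b s) = WL EG labG c 0 u) ↔ (labH (b s) = labG u) from Iff.rfl]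
    constructor
    · rintro ⟨-, h⟩
      funext i
      have hi := h _ (List.mem_map.mpr ⟨i, List.mem_finRange i, rfl⟩)
      by_cases hb : labG u i = true
      · rw [if_pos hb] at hi
        simp only [C2.sat] at hi
        rw [hi, hb]
      · rw [if_neg hb] at hi
        simp only [C2.sat] at hi
        rw [Bool.not_eq_true] at hi hb
        rw [hi, hb]
    · intro h
      refine ⟨by simp [C2.sat], ?_⟩
      intro φ hφ
      obtain ⟨i, -, rfl⟩ := List.mem_map.mp hφ
      by_cases hb : labG u i = true
      · rw [if_pos hb]
        simp only [C2.sat]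
        rw [congrFun h i]; exact hb
      · rw [if_neg hb]
        simp only [C2.sat]
        rw [congrFun h i]; exact hb
  | succ ℓ ih =>
    intro u s W' _ EH labH b
    rcases Nat.eq_zero_or_pos c with hc | hc1
    · subst hc
      rw [charForm, if_pos rfl, ih]
      constructor
      · intro h
        rw [WL_succ, WL_succ, h]
        simp [Prod.mk.injEq, trunc_zero]
        rfl
      · intro h
        rw [WL_succ, WL_succ] at h
        exact congrArg Prod.fst h
    · have hc0 : c ≠ 0 := by omega
      rw [charForm, if_neg hc0, sat_bigAnd, ih]
      classical
      have hupd_s : ∀ w' : W', Function.update b s.other w' s = b s :=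
        fun w' => Function.update_of_ne (Ne.symm (C2Var.other_ne s)) _ _
      have hupd_t : ∀ w' : W', Function.update b s.other w' s.other = w' :=
        fun w' => Function.update_self _ _ _
      have satnot : ∀ (ψ : C2 d) (a : C2Var → W'),
          C2.sat EH labH (C2.not ψ) a ↔ ¬ C2.sat EH labH ψ a := fun _ _ => Iff.rfl
      have satexN : ∀ (k : ℕ) (t : C2Var) (ψ : C2 d) (a : C2Var → W'),
          C2.sat EH labH (C2.exN k t ψ) a ↔
            k ≤ Nat.card {w' : W' | C2.sat EH labH ψ (Function.update a t w')} :=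
        fun _ _ _ _ => Iff.rfl
      have hinner : ∀ (j : ℕ) (w : V),
          Nat.card {w' : W' | C2.sat EH labH
            (C2.and (classAtom j s s.other) (charForm EG labG c ℓ w s.other))
            (Function.update b s.other w')}
          = Multiset.count (WL EG labG c ℓ w)
              (msetOf (clsP j EH (b s)) (WL EH labH c ℓ)) := by
        intro j w
        rw [← natcard_count (clsP j EH (b s)) (WL EH labH c ℓ) (WL EG labG c ℓ w)]
        refine congrArg (fun S : Set W' => Nat.card S) (Set.ext fun w' => ?_)
        simp only [Set.mem_setOf_eq, C2.sat, sat_classAtom, hupd_s, hupd_t, ih]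
      have hA : ∀ (j : ℕ) (w : V), (C2.sat EH labH
          (C2.exN (min c (mcount (msetOf (clsP j EG u) (WL EG labG c ℓ)) (WL EG labG c ℓ w)))
            s.other (.and (classAtom j s s.other) (charForm EG labG c ℓ w s.other))) b
        ↔ min c (Multiset.count (WL EG labG c ℓ w) (msetOf (clsP j EG u) (WL EG labG c ℓ)))
            ≤ Multiset.count (WL EG labG c ℓ w)
                (msetOf (clsP j EH (b s)) (WL EH labH c ℓ))) := by
        intro j w
        rw [satexN, hinner j w, mcount_eq]
      have hB : ∀ (j : ℕ) (w : V), (C2.sat EH labH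
          (C2.not (.exN (min c (mcount (msetOf (clsP j EG u) (WL EG labG c ℓ))
              (WL EG labG c ℓ w)) + 1)
            s.other (.and (classAtom j s s.other) (charForm EG labG c ℓ w s.other)))) b
        ↔ Multiset.count (WL EG labG c ℓ w) (msetOf (clsP j EH (b s)) (WL EH labH c ℓ))
            ≤ min c (Multiset.count (WL EG labG c ℓ w)
                (msetOf (clsP j EG u) (WL EG labG c ℓ)))) := by
        intro j w
        rw [satnot, satexN, hinner j w, mcount_eq]
        omega
      have hC : ∀ j : ℕ, (C2.sat EH labH (C2.not (.exN 1 s.other (bigAnd (classAtom j s s.other)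
            (Finset.univ.toList.map fun w : V => C2.not (charForm EG labG c ℓ w s.other))))) b
          ↔ ∀ w' : W', clsP j EH (b s) w' →
              ∃ w : V, WL EH labH c ℓ w' = WL EG labG c ℓ w) := by
        intro j
        rw [satnot, satexN, Nat.not_le, Nat.lt_one_iff]
        have hset : ∀ w' : W', (C2.sat EH labH (bigAnd (classAtom j s s.other)
            (Finset.univ.toList.map fun w : V => C2.not (charForm EG labG c ℓ w s.other)))
            (Function.update b s.other w'))
            ↔ (clsP j EH (b s) w' ∧ ∀ w : V, ¬ WL EH labH c ℓ w' = WL EG labG c ℓ w) := by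
          intro w'
          rw [sat_bigAnd, sat_classAtom, hupd_s, hupd_t]
          refine and_congr Iff.rfl ?_
          constructor
          · intro h w
            have := h _ (List.mem_map.mpr ⟨w, Finset.mem_toList.mpr (Finset.mem_univ w), rfl⟩)
            rw [satnot, ih, hupd_t] at this
            exact this
          · intro h φ hφ
            obtain ⟨w, -, rfl⟩ := List.mem_map.mp hφ
            rw [satnot, ih, hupd_t]
            exact h w
        rw [show {w' : W' | C2.sat EH labH (bigAnd (classAtom j s s.other)
            (Finset.univ.toList.map fun w : V => C2.not (charForm EG labG c ℓ w s.other)))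
            (Function.update b s.other w')}
          = {w' : W' | clsP j EH (b s) w' ∧ ∀ w : V, ¬ WL EH labH c ℓ w' = WL EG labG c ℓ w}
          from Set.ext fun w' => hset w']
        rw [natcard_zero_iff]
        constructor
        · intro h w' hw'
          by_contra hno
          push_neg at hno
          exact h w' ⟨hw', hno⟩
        · rintro h w' ⟨hw', hno⟩
          obtain ⟨w, hw⟩ := h w' hw'
          exact hno w hw
      constructor
      · rintro ⟨h0, hrest⟩
        have hjt : ∀ j, j < 4 →
            trunc c (msetOf (clsP j EH (b s)) (WL EH labH c ℓ))
              = trunc c (msetOf (clsP j EG u) (WL EG labG c ℓ)) := by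
          intro j hj
          refine (trunc_eq_iff c hc1 (clsP j EG u) (clsP j EH (b s))
            (WL EG labG c ℓ) (WL EH labH c ℓ)).mp ?_
          refine ⟨fun w => ?_, fun w hlt => ?_, fun w' hw' => ?_⟩
          · refine (hA j w).mp (hrest _ ?_)
            refine List.mem_flatMap.mpr ⟨j, List.mem_range.mpr hj, ?_⟩
            exact List.mem_append.mpr (Or.inl (List.mem_append.mpr (Or.inl
              (List.mem_map.mpr ⟨w, Finset.mem_toList.mpr (Finset.mem_univ w), rfl⟩))))
          · have hcond : min c (mcount (msetOf (clsP j EG u) (WL EG labG c ℓ))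
                (WL EG labG c ℓ w)) < c := by rw [mcount_eq]; exact hlt
            have hsat := hrest _ (List.mem_flatMap.mpr ⟨j, List.mem_range.mpr hj,
              List.mem_append.mpr (Or.inl (List.mem_append.mpr (Or.inr
                (List.mem_map.mpr ⟨w, Finset.mem_toList.mpr (Finset.mem_univ w), rfl⟩))))⟩)
            rw [if_pos hcond] at hsat
            exact (hB j w).mp hsat
          · have hsat := hrest _ (List.mem_flatMap.mpr ⟨j, List.mem_range.mpr hj,
              List.mem_append.mpr (Or.inr (List.mem_singleton.mpr rfl))⟩)
            obtain ⟨w, hw⟩ := (hC j).mp hsat w' hw'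
            exact ⟨w, hw⟩
        rw [WL_succ, WL_succ]
        exact (WLC_succ_eq_iff _ _ _ _ _ _ _ _ _ _).mpr
          ⟨h0, hjt 0 (by omega), hjt 1 (by omega), hjt 2 (by omega), hjt 3 (by omega)⟩
      · intro h
        have h' := h
        rw [WL_succ, WL_succ] at h'
        obtain ⟨h0, h1, h2, h3, h4⟩ := (WLC_succ_eq_iff _ _ _ _ _ _ _ _ _ _).mp h'
        refine ⟨h0, ?_⟩
        intro φ hφ
        obtain ⟨j, hj, hφ⟩ := List.mem_flatMap.mp hφ
        rw [List.mem_range] at hj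
        have htr : trunc c (msetOf (clsP j EH (b s)) (WL EH labH c ℓ))
            = trunc c (msetOf (clsP j EG u) (WL EG labG c ℓ)) := by
          interval_cases j <;> assumption
        have hfacts := (trunc_eq_iff c hc1 (clsP j EG u) (clsP j EH (b s))
          (WL EG labG c ℓ) (WL EH labH c ℓ)).mpr htr
        rcases List.mem_append.mp hφ with hφ' | hφ'
        · rcases List.mem_append.mp hφ' with hφ'' | hφ''
          · obtain ⟨w, -, rfl⟩ := List.mem_map.mp hφ''
            exact (hA j w).mpr (hfacts.1 w)
          · obtain ⟨w, -, rfl⟩ := List.mem_map.mp hφ''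
            split_ifs with hcond
            · rw [mcount_eq] at hcond
              exact (hB j w).mpr (hfacts.2.1 w hcond)
            · simp [C2.sat]
        · rw [List.mem_singleton.mp hφ']
          exact (hC j).mpr (fun w' hw' => hfacts.2.2 w' hw')

end CharSpec
/-- two nodes `u` (in `G`) and `v` (in `H`) satisfy the same `C²_{ℓ,c}`
formulas with one free variable `x` iff their `c`-bounded WL colours after `ℓ` rounds
coincide. -/
theorem stmt5 (ℓ c d : ℕ) {V W : Type} [Fintype V] [Fintype W]
    (EG : V → V → Prop) (labG : V → Fin d → Bool) (hG : ∀ v, ¬ EG v v)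
    (EH : W → W → Prop) (labH : W → Fin d → Bool) (hH : ∀ w, ¬ EH w w)
    (u : V) (v : W) :
    (∀ φ : C2 d, φ.depth ≤ ℓ → φ.rank ≤ c → φ.freeVars ⊆ {C2Var.x} →
        (C2.sat EG labG φ (fun _ => u) ↔ C2.sat EH labH φ (fun _ => v))) ↔
      WL EG labG c ℓ u = WL EH labH c ℓ v := by
  constructor
  · intro h
    have hφ := h (charForm EG labG c ℓ u C2Var.x) (charForm_depth EG labG c ℓ u C2Var.x)
      (charForm_rank EG labG c ℓ u C2Var.x) (charForm_freeVars EG labG c ℓ u C2Var.x)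
    have hGG : C2.sat EG labG (charForm EG labG c ℓ u C2Var.x) (fun _ => u) :=
      (charForm_spec EG labG c ℓ u C2Var.x EG labG (fun _ => u)).mpr rfl
    exact ((charForm_spec EG labG c ℓ u C2Var.x EH labH (fun _ => v)).mp (hφ.mp hGG)).symm
  · intro h φ hdep hrank _
    refine sound EG labG hG EH labH hH c φ (fun _ => u) (fun _ => v) hrank ?_ ?_ ?_
    · intro t
      exact WL_mono EG labG EH labH c ℓ φ.depth hdep u v h
    · intro s t; simp
    · intro s t; exact iff_of_false (hG u) (hH v)
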